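/- Let U ⊆ ℝⁿ, n ≥ 2, be a strictly starlike domain with radial function R, and let Ψ : U → ℝ be continuous. For θ ∈ S^{n−1}, say the radial limit Ψ*(θ) ∈ [−∞, +∞] exists if Ψ(ρθ) converges in the extended reals as ρ ↗ R(θ). Let A ⊆ S^{n−1} be the set of all θ for which Ψ*(θ) exists. Then A is a Borel measurable subset of S^{n−1} and the function Ψ* : A → [−∞, +∞] is of Baire class 0 or 1, i.e., Ψ* is the pointwise limit on A of a sequence of functions continuous on A. -/

import Mathlib

open Metric Set Filter Topology MeasureTheory
open scoped NNReal ENNReal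

noncomputable section

abbrev Euc (k : ℕ) := EuclideanSpace ℝ (Fin k)

/-- Second directional derivative of `u` at `x`, twice in the direction `v`. -/
def DirDeriv2 {X : Type*} [NormedAddCommGroup X] [NormedSpace ℝ X]
    (u : X → ℝ) (v : X) (x : X) : ℝ :=
  fderiv ℝ (fun y => fderiv ℝ u y v) x v

/-- Mixed second derivative of `u` at `x` in the directions `v`, `w`. -/
def MixedDeriv2 {X : Type*} [NormedAddCommGroup X] [NormedSpace ℝ X]
    (u : X → ℝ) (v w : X) (x : X) : ℝ :=
  fderiv ℝ (fun y => fderiv ℝ u y w) x v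

/-- The Euclidean Laplacian. -/
def EucLap {k : ℕ} (u : Euc k → ℝ) (x : Euc k) : ℝ :=
  ∑ i, DirDeriv2 u (EuclideanSpace.single i 1) x

/-- `u` is (classically) harmonic on the open set `U` : it is `C²` and `Δ u = 0` on `U`. -/
def HarmOn {k : ℕ} (u : Euc k → ℝ) (U : Set (Euc k)) : Prop :=
  IsOpen U ∧ ContDiffOn ℝ 2 u U ∧ ∀ x ∈ U, EucLap u x = 0

/-- `u : Euc k → EReal` is superharmonic on the open set `W`: it is lower semicontinuous,
`> -∞`, not `≡ +∞` on any component, and dominates on every ball every harmonic function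
which it dominates on the boundary sphere (the classical comparison characterization of
distributional `Δ u ≤ 0`). -/
def SuperharmOn {k : ℕ} (u : Euc k → EReal) (W : Set (Euc k)) : Prop :=
  IsOpen W ∧ LowerSemicontinuousOn u W ∧ (∀ x ∈ W, u x ≠ ⊥) ∧
    (∀ x ∈ W, ∃ y ∈ connectedComponentIn W x, u y ≠ ⊤) ∧
    ∀ (x : Euc k) (r : ℝ), 0 < r → closedBall x r ⊆ W →
      ∀ h : Euc k → ℝ, ContinuousOn h (closedBall x r) → HarmOn h (ball x r) →
        (∀ y ∈ sphere x r, (h y : EReal) ≤ u y) →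
        ∀ y ∈ ball x r, (h y : EReal) ≤ u y

/-- A set `A ⊆ ℝᵏ` is polar: some superharmonic function on an open `W ⊇ A`
is `+∞` on all of `A`. -/
def EucPolar {k : ℕ} (A : Set (Euc k)) : Prop :=
  ∃ (W : Set (Euc k)) (u : Euc k → EReal),
    IsOpen W ∧ A ⊆ W ∧ SuperharmOn u W ∧ ∀ x ∈ A, u x = ⊤

/-- A set `A` is thin at `y`. -/
def EucThinAt {k : ℕ} (A : Set (Euc k)) (y : Euc k) : Prop :=
  y ∉ closure (A \ {y}) ∨
    ∃ W : Set (Euc k), IsOpen W ∧ y ∈ W ∧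
      ∃ u : Euc k → EReal, SuperharmOn u W ∧ u y < Filter.liminf u (𝓝[A \ {y}] y)

/-- A subset `A` of the unit sphere `S^{k-1}` is (spherically) polar, i.e. polar for the
intrinsic potential theory of the round sphere; equivalently (Fuglede), the radial
cone over `A` is polar in `ℝᵏ`. -/
def SphPolar {k : ℕ} (A : Set (Euc k)) : Prop :=
  EucPolar {x : Euc k | x ≠ 0 ∧ ‖x‖⁻¹ • x ∈ A}

/-- The radial function of a set `U`, with values in `[0,+∞]`. -/
def radialE {k : ℕ} (U : Set (Euc k)) (θ : Euc k) : EReal :=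
  sSup ((fun ρ : ℝ => (ρ : EReal)) '' {ρ : ℝ | 0 ≤ ρ ∧ ρ • θ ∈ U})

/-- `U` is a strictly starlike domain (with respect to the origin). -/
def IsStrictStar {k : ℕ} (U : Set (Euc k)) : Prop :=
  IsOpen U ∧ IsConnected U ∧ ∀ p ∈ closure U, ∀ t : ℝ, 0 ≤ t → t < 1 → t • p ∈ U

/-- The filter of real numbers `ρ ↑ c` (for an extended real `c`). -/
def upFilter (c : EReal) : Filter ℝ :=
  Filter.comap (fun ρ : ℝ => (ρ : EReal)) (𝓝[<] c)

/-- The filter of real numbers `ρ ↓ c` (for an extended real `c`). -/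
def downFilter (c : EReal) : Filter ℝ :=
  Filter.comap (fun ρ : ℝ => (ρ : EReal)) (𝓝[>] c)

/-- The filter describing the radial approach `ρ ↗ R(θ)` in a starlike domain. -/
def radialFilter {k : ℕ} (U : Set (Euc k)) (θ : Euc k) : Filter ℝ :=
  upFilter (radialE U θ) ⊓ 𝓟 (Ici (0:ℝ))

/-- A second order partial differential operator
`L = ∑ aᵢⱼ ∂²/∂xᵢ∂xⱼ + ∑ bᵢ ∂/∂xᵢ + c` on a domain `Ω ⊆ ℝᵏ`, with
`aᵢⱼ = aⱼᵢ ∈ C^{2,1}`, `bᵢ ∈ C^{1,1}`, `c ∈ C^{0,1}`, `c ≤ 0`, and `(aᵢⱼ)`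
positive definite on `Ω` (so `L` is elliptic). -/
structure EllipticOp (k : ℕ) (Ω : Set (Euc k)) where
  a : Fin k → Fin k → Euc k → ℝ
  b : Fin k → Euc k → ℝ
  c : Euc k → ℝ
  symm : ∀ i j x, a i j x = a j i x
  a_C2 : ∀ i j, ContDiffOn ℝ 2 (a i j) Ω
  a_lip : ∀ i j, ∀ x ∈ Ω, ∃ t ∈ 𝓝 x, ∃ K : ℝ≥0,
    LipschitzOnWith K (iteratedFDerivWithin ℝ 2 (a i j) Ω) (t ∩ Ω)
  b_C1 : ∀ i, ContDiffOn ℝ 1 (b i) Ω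
  b_lip : ∀ i, ∀ x ∈ Ω, ∃ t ∈ 𝓝 x, ∃ K : ℝ≥0,
    LipschitzOnWith K (iteratedFDerivWithin ℝ 1 (b i) Ω) (t ∩ Ω)
  c_C0 : ContinuousOn c Ω
  c_lip : ∀ x ∈ Ω, ∃ t ∈ 𝓝 x, ∃ K : ℝ≥0, LipschitzOnWith K c (t ∩ Ω)
  c_nonpos : ∀ x ∈ Ω, c x ≤ 0
  posdef : ∀ x ∈ Ω, ∀ v : Fin k → ℝ, v ≠ 0 → 0 < ∑ i, ∑ j, a i j x * v i * v j

/-- The action of the operator `L` on a function `u`. -/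
def EllipticOp.app {k : ℕ} {Ω : Set (Euc k)} (L : EllipticOp k Ω)
    (u : Euc k → ℝ) (x : Euc k) : ℝ :=
  (∑ i, ∑ j, L.a i j x *
      MixedDeriv2 u (EuclideanSpace.single i 1) (EuclideanSpace.single j 1) x) +
    (∑ i, L.b i x * fderiv ℝ u x (EuclideanSpace.single i 1)) + L.c x * u x

/-- `u` is `L`-harmonic on the open set `U ⊆ Ω` : `u ∈ C²(U)` and `L u = 0` on `U`. -/
def LHarmOn {k : ℕ} {Ω : Set (Euc k)} (L : EllipticOp k Ω)
    (u : Euc k → ℝ) (U : Set (Euc k)) : Prop :=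
  U ⊆ Ω ∧ IsOpen U ∧ ContDiffOn ℝ 2 u U ∧ ∀ x ∈ U, L.app u x = 0

/-- `u : Euc k → EReal` is `L`-superharmonic on the open set `W ⊆ Ω`
(comparison characterization of the lower semicontinuous distributional
solutions of `L u ≤ 0`). -/
def LSuperharmOn {k : ℕ} {Ω : Set (Euc k)} (L : EllipticOp k Ω)
    (u : Euc k → EReal) (W : Set (Euc k)) : Prop :=
  W ⊆ Ω ∧ IsOpen W ∧ LowerSemicontinuousOn u W ∧ (∀ x ∈ W, u x ≠ ⊥) ∧
    (∀ x ∈ W, ∃ y ∈ connectedComponentIn W x, u y ≠ ⊤) ∧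
    ∀ (x : Euc k) (r : ℝ), 0 < r → closedBall x r ⊆ W →
      ∀ h : Euc k → ℝ, ContinuousOn h (closedBall x r) → LHarmOn L h (ball x r) →
        (∀ y ∈ sphere x r, (h y : EReal) ≤ u y) →
        ∀ y ∈ ball x r, (h y : EReal) ≤ u y

/-- There exists an `L`-superharmonic function `> 0` on `D` which is not `L`-harmonic. -/
def HasLPotentialOn {k : ℕ} {Ω : Set (Euc k)} (L : EllipticOp k Ω) (D : Set (Euc k)) : Prop :=
  ∃ u : Euc k → EReal, LSuperharmOn L u D ∧ (∀ x ∈ D, 0 < u x) ∧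
    ¬ ∃ v : Euc k → ℝ, LHarmOn L v D ∧ ∀ x ∈ D, u x = (v x : EReal)

/-- `K` is an `L`-Mergelyan set in the domain `D`. -/
def LMergelyan {k : ℕ} {Ω : Set (Euc k)} (L : EllipticOp k Ω) (D K : Set (Euc k)) : Prop :=
  IsCompact K ∧ K ⊆ D ∧
    ∀ u : Euc k → ℝ, ContinuousOn u K → LHarmOn L u (interior K) →
      ∀ ε : ℝ, 0 < ε → ∃ v : Euc k → ℝ, LHarmOn L v D ∧ ∀ x ∈ K, |v x - u x| < ε

/-- `S` is an `L`-Carleman set in the domain `D` (`S` is closed in `D`). -/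
def LCarleman {k : ℕ} {Ω : Set (Euc k)} (L : EllipticOp k Ω) (D S : Set (Euc k)) : Prop :=
  S ⊆ D ∧ closure S ∩ D ⊆ S ∧
    ∀ u : Euc k → ℝ, ContinuousOn u S → LHarmOn L u (interior S) →
      ∀ ε : Euc k → ℝ, ContinuousOn ε S → (∀ x ∈ S, ε x ∈ Ioc (0:ℝ) 1) →
        ∃ v : Euc k → ℝ, LHarmOn L v D ∧ ∀ x ∈ S, |v x - u x| < ε x

/-- `C` is a chaplet in the domain `D`: the union of a locally finite (in `D`) family of
pairwise disjoint, connected, compact `L`-Mergelyan sets contained in `D`, whose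
complements in `ℝᵏ` are connected. -/
def LChaplet {k : ℕ} {Ω : Set (Euc k)} (L : EllipticOp k Ω) (D C : Set (Euc k)) : Prop :=
  ∃ 𝒬 : Set (Set (Euc k)),
    C = ⋃₀ 𝒬 ∧
    (∀ x ∈ D, ∃ t ∈ 𝓝 x, {q ∈ 𝒬 | (q ∩ t).Nonempty}.Finite) ∧
    (𝒬.Pairwise Disjoint) ∧
    ∀ q ∈ 𝒬, IsCompact q ∧ IsConnected q ∧ q ⊆ D ∧ IsConnected qᶜ ∧ LMergelyan L D q

/-- The union of `F` with all of its holes (the bounded components of `D \ F`),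
relative to the domain `D`. -/
def hullIn {k : ℕ} (D F : Set (Euc k)) : Set (Euc k) :=
  F ∪ {x | x ∈ D \ F ∧ IsCompact (closure (connectedComponentIn (D \ F) x)) ∧
        closure (connectedComponentIn (D \ F) x) ⊆ D}



section AuxStarlike

open Real

variable {k : ℕ} {U : Set (Euc k)}

lemma IsStrictStar.smul_mem (hU : IsStrictStar U) {p : Euc k} (hp : p ∈ U)
    {t : ℝ} (h0 : 0 ≤ t) (h1 : t < 1) : t • p ∈ U :=
  hU.2.2 p (subset_closure hp) t h0 h1

lemma IsStrictStar.zero_mem (hU : IsStrictStar U) : (0 : Euc k) ∈ U := by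
  obtain ⟨p, hp⟩ := hU.2.1.nonempty
  have := hU.smul_mem hp (le_refl (0:ℝ)) one_pos
  simpa using this

/-- The set of admissible radii in the direction `θ`. -/
def starSet (U : Set (Euc k)) (θ : Euc k) : Set ℝ := {ρ : ℝ | 0 ≤ ρ ∧ ρ • θ ∈ U}

/-- The arctangent-compactified radial function. -/
noncomputable def Bfun (U : Set (Euc k)) (θ : Euc k) : ℝ :=
  sSup (Real.arctan '' starSet U θ)

lemma bddAbove_arctan_starSet (U : Set (Euc k)) (θ : Euc k) :
    BddAbove (Real.arctan '' starSet U θ) := by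
  refine ⟨π/2, ?_⟩
  rintro _ ⟨ρ, -, rfl⟩
  exact (Real.arctan_lt_pi_div_two ρ).le

lemma zero_mem_starSet (hU : IsStrictStar U) (θ : Euc k) : (0:ℝ) ∈ starSet U θ :=
  ⟨le_rfl, by simpa using hU.zero_mem⟩

lemma nonempty_arctan_starSet (hU : IsStrictStar U) (θ : Euc k) :
    (Real.arctan '' starSet U θ).Nonempty :=
  ⟨Real.arctan 0, 0, zero_mem_starSet hU θ, rfl⟩

lemma le_Bfun (hU : IsStrictStar U) {θ : Euc k} {ρ : ℝ} (hρ : ρ ∈ starSet U θ) :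
    Real.arctan ρ ≤ Bfun U θ :=
  le_csSup (bddAbove_arctan_starSet U θ) ⟨ρ, hρ, rfl⟩

lemma Bfun_nonneg (hU : IsStrictStar U) (θ : Euc k) : 0 ≤ Bfun U θ := by
  have := le_Bfun hU (zero_mem_starSet hU θ)
  simpa [Real.arctan_zero] using this

lemma Bfun_le_pi_div_two (hU : IsStrictStar U) (θ : Euc k) : Bfun U θ ≤ π/2 :=
  csSup_le (nonempty_arctan_starSet hU θ)
    (by rintro _ ⟨ρ, -, rfl⟩; exact (Real.arctan_lt_pi_div_two ρ).le)

lemma arctan_lt_Bfun_iff (hU : IsStrictStar U) {θ : Euc k} {x : ℝ} :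
    Real.arctan x < Bfun U θ ↔ ∃ ρ ∈ starSet U θ, x < ρ := by
  rw [Bfun, lt_csSup_iff (bddAbove_arctan_starSet U θ) (nonempty_arctan_starSet hU θ)]
  constructor
  · rintro ⟨_, ⟨ρ, hρ, rfl⟩, h⟩
    exact ⟨ρ, hρ, Real.arctan_strictMono.lt_iff_lt.mp h⟩
  · rintro ⟨ρ, hρ, h⟩
    exact ⟨Real.arctan ρ, ⟨ρ, hρ, rfl⟩, Real.arctan_strictMono h⟩

lemma smul_mem_of_arctan_lt (hU : IsStrictStar U) {θ : Euc k} {x : ℝ}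
    (hx : 0 ≤ x) (h : Real.arctan x < Bfun U θ) : x • θ ∈ U := by
  obtain ⟨ρ, ⟨hρ0, hρU⟩, hxρ⟩ := (arctan_lt_Bfun_iff hU).mp h
  have hρpos : 0 < ρ := lt_of_le_of_lt hx hxρ
  have h2 := hU.smul_mem hρU (div_nonneg hx hρpos.le) ((div_lt_one hρpos).2 hxρ)
  rwa [smul_smul, div_mul_cancel₀ _ hρpos.ne'] at h2

lemma Bfun_pos (hU : IsStrictStar U) {θ : Euc k} (hθ : ‖θ‖ = 1) : 0 < Bfun U θ := by
  obtain ⟨ε, hε, hball⟩ := Metric.isOpen_iff.mp hU.1 0 hU.zero_mem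
  have hnorm : ‖(ε/2) • θ‖ = ε/2 := by
    rw [norm_smul, hθ, mul_one, Real.norm_eq_abs, abs_of_pos (by positivity)]
  have hmem : (ε/2) ∈ starSet U θ := by
    refine ⟨by positivity, hball ?_⟩
    rw [mem_ball_zero_iff, hnorm]
    linarith
  have h1 := le_Bfun hU hmem
  have h2 : 0 < Real.arctan (ε/2) := by
    rw [← Real.arctan_zero]
    exact Real.arctan_strictMono (by positivity)
  linarith

lemma coe_lt_radialE_iff (hU : IsStrictStar U) {θ : Euc k} {x : ℝ} :
    (x : EReal) < radialE U θ ↔ Real.arctan x < Bfun U θ := by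
  rw [radialE, lt_sSup_iff, arctan_lt_Bfun_iff hU]
  constructor
  · rintro ⟨_, ⟨ρ, hρ, rfl⟩, h⟩
    exact ⟨ρ, hρ, EReal.coe_lt_coe_iff.mp h⟩
  · rintro ⟨ρ, hρ, h⟩
    exact ⟨(ρ : EReal), ⟨ρ, hρ, rfl⟩, EReal.coe_lt_coe_iff.mpr h⟩

lemma radialE_eq_top (hU : IsStrictStar U) {θ : Euc k} (h : Bfun U θ = π/2) :
    radialE U θ = ⊤ := by
  rw [EReal.eq_top_iff_forall_lt]
  intro y
  exact (coe_lt_radialE_iff hU).2 (by rw [h]; exact Real.arctan_lt_pi_div_two y)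

lemma radialE_eq_coe (hU : IsStrictStar U) {θ : Euc k} (h : Bfun U θ < π/2) :
    radialE U θ = ((Real.tan (Bfun U θ) : ℝ) : EReal) := by
  have hB0 : 0 ≤ Bfun U θ := Bfun_nonneg hU θ
  have harc : Real.arctan (Real.tan (Bfun U θ)) = Bfun U θ :=
    Real.arctan_tan (by linarith [Real.pi_pos]) h
  refine le_antisymm ?_ ?_
  · rw [radialE]
    apply sSup_le
    rintro _ ⟨ρ, ⟨hρ0, hρU⟩, rfl⟩
    rw [EReal.coe_le_coe_iff]
    have h1 : Real.arctan ρ ≤ Bfun U θ := le_Bfun hU ⟨hρ0, hρU⟩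
    rw [← harc] at h1
    exact Real.arctan_strictMono.le_iff_le.mp h1
  · by_contra hlt
    push_neg at hlt
    have h0R : ((0:ℝ) : EReal) ≤ radialE U θ := by
      rw [radialE]
      exact le_sSup ⟨0, zero_mem_starSet hU θ, rfl⟩
    have hRne_top : radialE U θ ≠ ⊤ := hlt.ne_top
    have hRne_bot : radialE U θ ≠ ⊥ := by
      intro hbot
      rw [hbot] at h0R
      simp at h0R
    have hcoe : (((radialE U θ).toReal : ℝ) : EReal) = radialE U θ :=
      EReal.coe_toReal hRne_top hRne_bot
    have h2 : Real.arctan (radialE U θ).toReal < Bfun U θ := by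
      rw [← harc]
      apply Real.arctan_strictMono
      have h3 := hlt
      rw [← hcoe] at h3
      exact_mod_cast h3
    have h4 := (coe_lt_radialE_iff hU).2 h2
    rw [hcoe] at h4
    exact lt_irrefl _ h4

lemma radialFilter_eq_map (hU : IsStrictStar U) {θ : Euc k} (hθ : ‖θ‖ = 1) :
    radialFilter U θ =
      Filter.map (fun s : ℝ => Real.tan (s * Bfun U θ)) (𝓝[<] (1:ℝ)) := by
  have hT0 : 0 < Bfun U θ := Bfun_pos hU hθ
  have hTle : Bfun U θ ≤ π/2 := Bfun_le_pi_div_two hU θ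
  set T := Bfun U θ with hTdef
  have hIoo : Ioo (0:ℝ) 1 ∈ 𝓝[<] (1:ℝ) := Ioo_mem_nhdsLT_of_mem ⟨one_pos, le_rfl⟩
  have hkey : ∀ s : ℝ, 0 ≤ s → s < 1 → 0 ≤ s * T ∧ s * T < T ∧
      Real.arctan (Real.tan (s * T)) = s * T := by
    intro s h0 h1
    have h2 : s * T < T := by nlinarith
    have h3 : 0 ≤ s * T := mul_nonneg h0 hT0.le
    exact ⟨h3, h2, Real.arctan_tan (by linarith [Real.pi_pos]) (by linarith)⟩
  apply le_antisymm
  · intro S hS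
    rw [Filter.mem_map] at hS
    obtain ⟨a, ha1, haS⟩ := (nhdsLT_basis (1:ℝ)).mem_iff.mp hS
    set a' := max a 0 with ha'
    have ha'0 : 0 ≤ a' := le_max_right a 0
    have ha'1 : a' < 1 := max_lt ha1 one_pos
    obtain ⟨h3, h4, h5⟩ := hkey a' ha'0 ha'1
    set c := Real.tan (a' * T) with hc
    have hc0 : 0 ≤ c := Real.tan_nonneg_of_nonneg_of_le_pi_div_two h3 (by linarith)
    have hcR : (c : EReal) < radialE U θ := (coe_lt_radialE_iff hU).2 (by rw [h5]; exact h4)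
    have hsub : (fun x : ℝ => (x : EReal)) ⁻¹' (Iio (radialE U θ) ∩ Ioi (c:EReal)) ⊆ S := by
      intro x hx
      simp only [Set.mem_preimage, Set.mem_inter_iff, Set.mem_Ioi, Set.mem_Iio] at hx
      obtain ⟨h2, h1⟩ := hx
      have hcx : c < x := EReal.coe_lt_coe_iff.mp h1
      have hax : Real.arctan x < T := (coe_lt_radialE_iff hU).1 h2
      have harcx : a' * T < Real.arctan x := by
        rw [← h5]; exact Real.arctan_strictMono hcx
      have hs1 : Real.arctan x / T < 1 := (div_lt_one hT0).2 hax
      have hs0 : a' < Real.arctan x / T := (lt_div_iff₀ hT0).2 harcx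
      have hval : Real.tan (Real.arctan x / T * T) = x := by
        rw [div_mul_cancel₀ _ hT0.ne', Real.tan_arctan]
      have hmem2 : Real.arctan x / T ∈ Ioo a 1 :=
        ⟨lt_of_le_of_lt (le_max_left a 0) hs0, hs1⟩
      have h6 := haS hmem2
      rwa [Set.mem_preimage, hval] at h6
    unfold radialFilter upFilter
    apply Filter.mem_inf_of_left
    exact Filter.mem_comap.2
      ⟨_, inter_mem_nhdsWithin (Iio (radialE U θ)) (isOpen_Ioi.mem_nhds hcR), hsub⟩
  · show Tendsto (fun s : ℝ => Real.tan (s * T)) (𝓝[<] (1:ℝ)) (radialFilter U θ)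
    unfold radialFilter upFilter
    refine Filter.tendsto_inf.2 ⟨?_, ?_⟩
    · rw [Filter.tendsto_comap_iff]
      show Tendsto (fun s : ℝ => ((Real.tan (s * T) : ℝ) : EReal)) (𝓝[<] (1:ℝ))
        (𝓝[<] (radialE U θ))
      rw [tendsto_nhdsWithin_iff]
      constructor
      · have hmul : Tendsto (fun s : ℝ => s * T) (𝓝[<] (1:ℝ)) (𝓝 T) := by
          have h1 := (continuous_id.mul (continuous_const (y := T))).tendsto (1:ℝ)
          simp only [Pi.mul_def, id_eq, one_mul] at h1
          exact h1.mono_left nhdsWithin_le_nhds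
        rcases lt_or_eq_of_le hTle with hlt | heq
        · rw [radialE_eq_coe hU hlt]
          rw [EReal.tendsto_coe]
          have hcos : Real.cos T ≠ 0 :=
            (Real.cos_pos_of_mem_Ioo ⟨by linarith [Real.pi_pos], hlt⟩).ne'
          exact ((Real.continuousAt_tan.2 hcos).tendsto).comp hmul
        · rw [radialE_eq_top hU heq]
          rw [EReal.tendsto_nhds_top_iff_real]
          intro x
          have h1 : Tendsto (fun s : ℝ => s * T) (𝓝[<] (1:ℝ)) (𝓝[<] (π/2)) := by
            rw [tendsto_nhdsWithin_iff]
            constructor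
            · rw [← heq]; exact hmul
            · filter_upwards [hIoo] with s hs
              have := (hkey s hs.1.le hs.2).2.1
              exact lt_of_lt_of_le this (le_of_eq heq)
          have h2 := Real.tendsto_tan_pi_div_two.comp h1
          filter_upwards [h2.eventually (eventually_gt_atTop x)] with s hs
          exact EReal.coe_lt_coe_iff.2 hs
      · filter_upwards [hIoo] with s hs
        refine (coe_lt_radialE_iff hU).2 ?_
        rw [(hkey s hs.1.le hs.2).2.2]
        exact (hkey s hs.1.le hs.2).2.1
    · rw [Filter.tendsto_principal]
      filter_upwards [hIoo] with s hs
      obtain ⟨h3, h4, -⟩ := hkey s hs.1.le hs.2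
      exact Real.tan_nonneg_of_nonneg_of_le_pi_div_two h3 (by linarith)

lemma Bfun_continuous (hU : IsStrictStar U) : Continuous (Bfun U) := by
  rw [continuous_iff_continuousAt]
  intro θ₀
  rw [ContinuousAt, tendsto_order]
  constructor
  · intro c hc
    obtain ⟨_, ⟨ρ, hρ, rfl⟩, hcρ⟩ :=
      exists_lt_of_lt_csSup (nonempty_arctan_starSet hU θ₀) hc
    have hopen : IsOpen {θ : Euc k | ρ • θ ∈ U} := hU.1.preimage (continuous_const_smul ρ)
    filter_upwards [hopen.mem_nhds hρ.2] with θ hθ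
    exact lt_of_lt_of_le hcρ (le_Bfun hU ⟨hρ.1, hθ⟩)
  · intro c hc
    rcases le_or_gt c (π/2) with hcle | hcgt
    · obtain ⟨c', hc'1, hc'2⟩ := exists_between hc
      have hc'0 : 0 < c' := lt_of_le_of_lt (Bfun_nonneg hU θ₀) hc'1
      have hc'lt : c' < π/2 := lt_of_lt_of_le hc'2 hcle
      set r := Real.tan c' with hr
      have hr0 : 0 < r := Real.tan_pos_of_pos_of_lt_pi_div_two hc'0 hc'lt
      have harc : Real.arctan r = c' := Real.arctan_tan (by linarith [Real.pi_pos]) hc'lt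
      have hnot : r • θ₀ ∉ closure U := by
        intro hmem
        obtain ⟨c'', hc''1, hc''2⟩ := exists_between hc'1
        have hc''0 : 0 < c'' := lt_of_le_of_lt (Bfun_nonneg hU θ₀) hc''1
        have hc''lt : c'' < π/2 := hc''2.trans hc'lt
        have htan0 : 0 ≤ Real.tan c'' :=
          Real.tan_nonneg_of_nonneg_of_le_pi_div_two hc''0.le hc''lt.le
        have htr : Real.tan c'' < r := by
          have h5 : Real.arctan (Real.tan c'') < Real.arctan r := by
            rw [Real.arctan_tan (by linarith [Real.pi_pos]) hc''lt, harc]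
            exact hc''2
          exact Real.arctan_strictMono.lt_iff_lt.mp h5
        have ht0 : 0 ≤ Real.tan c'' / r := div_nonneg htan0 hr0.le
        have ht1 : Real.tan c'' / r < 1 := (div_lt_one hr0).2 htr
        have h6 := hU.2.2 _ hmem _ ht0 ht1
        rw [smul_smul, div_mul_cancel₀ _ hr0.ne'] at h6
        have h7 : Real.arctan (Real.tan c'') ≤ Bfun U θ₀ := le_Bfun hU ⟨htan0, h6⟩
        rw [Real.arctan_tan (by linarith [Real.pi_pos]) hc''lt] at h7
        linarith
      have hopen : IsOpen {θ : Euc k | r • θ ∈ (closure U)ᶜ} :=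
        isClosed_closure.isOpen_compl.preimage (continuous_const_smul r)
      filter_upwards [hopen.mem_nhds hnot] with θ hθ
      refine lt_of_le_of_lt (csSup_le (nonempty_arctan_starSet hU θ) ?_) hc'2
      rintro _ ⟨ρ, ⟨hρ0, hρU⟩, rfl⟩
      have hρr : ρ ≤ r := by
        by_contra hltρ
        push_neg at hltρ
        have hρpos : 0 < ρ := hr0.trans hltρ
        have h8 := hU.smul_mem hρU (div_nonneg hr0.le hρpos.le) ((div_lt_one hρpos).2 hltρ)
        rw [smul_smul, div_mul_cancel₀ _ hρpos.ne'] at h8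
        exact hθ (subset_closure h8)
      calc Real.arctan ρ ≤ Real.arctan r := Real.arctan_strictMono.monotone hρr
        _ = c' := harc
    · filter_upwards with θ using lt_of_le_of_lt (Bfun_le_pi_div_two hU θ) hcgt

end AuxStarlike

/-- For a continuous `Ψ : U → ℝ` on a strictly starlike domain `U`, the
set `A ⊆ S^{n-1}` of directions along which the radial limit `Ψ*(θ) ∈ [-∞, +∞]` exists is
Borel measurable, and `Ψ* : A → [-∞, +∞]` is of Baire class `0` or `1` (a pointwise limit
on `A` of functions continuous on `A`). -/
theorem radial_limit_set_measurable_baire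
    (n : ℕ) (hn : 2 ≤ n) (U : Set (Euc n)) (hU : IsStrictStar U)
    (Ψ : Euc n → ℝ) (hΨ : ContinuousOn Ψ U)
    (A : Set ↥(sphere (0 : Euc n) 1))
    (hA : A = {θ : ↥(sphere (0 : Euc n) 1) | ∃ l : EReal,
      Tendsto (fun ρ : ℝ => ((Ψ (ρ • (θ : Euc n)) : ℝ) : EReal))
        (radialFilter U (θ : Euc n)) (𝓝 l)}) :
    MeasurableSet A ∧
      ∃ Ψs : ↥(sphere (0 : Euc n) 1) → EReal,
        (∀ θ ∈ A, Tendsto (fun ρ : ℝ => ((Ψ (ρ • (θ : Euc n)) : ℝ) : EReal))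
          (radialFilter U (θ : Euc n)) (𝓝 (Ψs θ))) ∧
        ∃ g : ℕ → ↥(sphere (0 : Euc n) 1) → EReal,
          (∀ j, ContinuousOn (g j) A) ∧
          ∀ θ ∈ A, Tendsto (fun j => g j θ) atTop (𝓝 (Ψs θ)) := by
  have hθnorm : ∀ θ : ↥(sphere (0 : Euc n) 1), ‖(θ : Euc n)‖ = 1 := fun θ =>
    mem_sphere_zero_iff_norm.mp θ.2
  set T : ↥(sphere (0 : Euc n) 1) → ℝ := fun θ => Bfun U (θ : Euc n) with hTdef
  have hTcont : Continuous T := (Bfun_continuous hU).comp continuous_subtype_val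
  have hT0 : ∀ θ, 0 < T θ := fun θ => Bfun_pos hU (hθnorm θ)
  have hTle : ∀ θ, T θ ≤ Real.pi/2 := fun θ => Bfun_le_pi_div_two hU _
  set G : ↥(sphere (0 : Euc n) 1) → ℝ → EReal :=
    fun θ s => ((Ψ (Real.tan (s * T θ) • (θ : Euc n)) : ℝ) : EReal) with hGdef
  have hmap : ∀ θ : ↥(sphere (0 : Euc n) 1), radialFilter U (θ : Euc n) =
      Filter.map (fun s : ℝ => Real.tan (s * T θ)) (𝓝[<] (1:ℝ)) :=
    fun θ => radialFilter_eq_map hU (hθnorm θ)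
  have hslice : ∀ s ∈ Ico (0:ℝ) 1, Continuous fun θ => G θ s := by
    intro s hs
    have hcont1 : Continuous fun θ => Real.tan (s * T θ) := by
      rw [continuous_iff_continuousAt]
      intro θ
      have hmem : s * T θ ∈ Ioo (-(Real.pi/2)) (Real.pi/2) := by
        constructor
        · have := mul_nonneg hs.1 (hT0 θ).le
          linarith [Real.pi_pos]
        · have h2 : s * T θ < T θ := by nlinarith [hT0 θ, hs.1, hs.2]
          linarith [hTle θ]
      have h1 : ContinuousAt (fun θ => s * T θ) θ := (continuous_const.mul hTcont).continuousAt
      have h2 : ContinuousAt Real.tan (s * T θ) :=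
        Real.continuousAt_tan.2 (Real.cos_pos_of_mem_Ioo hmem).ne'
      have h3 := Filter.Tendsto.comp h2 h1
      exact h3
    have hcont2 : Continuous
        fun θ : ↥(sphere (0:Euc n) 1) => Real.tan (s * T θ) • (θ : Euc n) :=
      hcont1.smul continuous_subtype_val
    rw [continuous_iff_continuousAt]
    intro θ
    have hmemU : Real.tan (s * T θ) • (θ : Euc n) ∈ U := by
      apply smul_mem_of_arctan_lt hU
      · exact Real.tan_nonneg_of_nonneg_of_le_pi_div_two (mul_nonneg hs.1 (hT0 θ).le)
          (by nlinarith [hT0 θ, hTle θ, hs.1, hs.2])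
      · rw [Real.arctan_tan (by nlinarith [hT0 θ, hs.1, Real.pi_pos])
          (by nlinarith [hT0 θ, hTle θ, hs.1, hs.2])]
        show s * T θ < T θ
        nlinarith [hT0 θ, hs.1, hs.2]
    have hc3 : ContinuousAt Ψ (Real.tan (s * T θ) • (θ : Euc n)) :=
      hΨ.continuousAt (hU.1.mem_nhds hmemU)
    have hc4 : ContinuousAt
        (fun θ' : ↥(sphere (0:Euc n) 1) => Real.tan (s * T θ') • (θ' : Euc n)) θ :=
      hcont2.continuousAt
    have hc5 : ContinuousAt (fun x : ℝ => (x : EReal)) (Ψ (Real.tan (s * T θ) • (θ : Euc n))) :=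
      continuous_coe_real_ereal.continuousAt
    have hc6 := Filter.Tendsto.comp hc5 (Filter.Tendsto.comp hc3 hc4)
    exact hc6
  set sq : ℕ → ℝ := fun j : ℕ => 1 - 1/((j:ℝ)+1) with hsqdef
  have hsqIco : ∀ j, sq j ∈ Ico (0:ℝ) 1 := by
    intro j
    have h1 : (0:ℝ) < (j:ℝ)+1 := by positivity
    constructor
    · have h2 : 1/((j:ℝ)+1) ≤ 1 := by
        rw [div_le_one h1]
        linarith [show (0:ℝ) ≤ (j:ℝ) from Nat.cast_nonneg j]
      show (0:ℝ) ≤ 1 - 1/((j:ℝ)+1)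
      linarith
    · have h2 : 0 < 1/((j:ℝ)+1) := by positivity
      show (1:ℝ) - 1/((j:ℝ)+1) < 1
      linarith
  have hbasis : (𝓝[<] (1:ℝ)).HasBasis (fun _ : ℕ => True) (fun j => Ioo (sq j) 1) := by
    apply (nhdsLT_basis (1:ℝ)).to_hasBasis
    · intro a ha
      obtain ⟨j, hj⟩ := exists_nat_one_div_lt (show (0:ℝ) < 1 - a by linarith)
      refine ⟨j, trivial, Ioo_subset_Ioo_left ?_⟩
      show a ≤ 1 - 1/((j:ℝ)+1)
      linarith
    · intro j _
      exact ⟨sq j, (hsqIco j).2, subset_rfl⟩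
  set Lp : ↥(sphere (0 : Euc n) 1) → EReal :=
    fun θ => limsup (G θ) (𝓝[<] (1:ℝ)) with hLpdef
  set Lm : ↥(sphere (0 : Euc n) 1) → EReal :=
    fun θ => liminf (G θ) (𝓝[<] (1:ℝ)) with hLmdef
  have hLpEq : Lp = fun θ => ⨅ j : ℕ, ⨆ s ∈ Ioo (sq j) 1, G θ s := by
    funext θ
    simp only [hLpdef]
    rw [hbasis.limsup_eq_iInf_iSup]
    simp
  have hLmEq : Lm = fun θ => ⨆ j : ℕ, ⨅ s ∈ Ioo (sq j) 1, G θ s := by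
    funext θ
    simp only [hLmdef]
    rw [hbasis.liminf_eq_iSup_iInf]
    simp
  have hsliceIoo : ∀ (j : ℕ) (s : ℝ), s ∈ Ioo (sq j) 1 → Continuous fun θ => G θ s :=
    fun j s hs => hslice s ⟨le_trans (hsqIco j).1 hs.1.le, hs.2⟩
  have hLpMeas : Measurable Lp := by
    rw [hLpEq]
    apply Measurable.iInf
    intro j
    have heq : (fun θ => ⨆ s ∈ Ioo (sq j) 1, G θ s)
        = fun θ => ⨆ s : Ioo (sq j) 1, G θ s := by
      funext θ
      rw [iSup_subtype']
    rw [heq]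
    exact (lowerSemicontinuous_iSup fun s : Ioo (sq j) 1 =>
      (hsliceIoo j s s.2).lowerSemicontinuous).measurable
  have hLmMeas : Measurable Lm := by
    rw [hLmEq]
    apply Measurable.iSup
    intro j
    have heq : (fun θ => ⨅ s ∈ Ioo (sq j) 1, G θ s)
        = fun θ => ⨅ s : Ioo (sq j) 1, G θ s := by
      funext θ
      rw [iInf_subtype']
    rw [heq]
    exact (upperSemicontinuous_iInf fun s : Ioo (sq j) 1 =>
      (hsliceIoo j s s.2).upperSemicontinuous).measurable
  have hconv : ∀ θ, Lp θ ≤ Lm θ → Tendsto (G θ) (𝓝[<] (1:ℝ)) (𝓝 (Lp θ)) := by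
    intro θ hle
    exact tendsto_of_liminf_eq_limsup (le_antisymm liminf_le_limsup hle) rfl
  have hAchar : A = {θ | Lp θ ≤ Lm θ} := by
    rw [hA]
    ext θ
    simp only [Set.mem_setOf_eq]
    rw [hmap θ]
    simp only [Filter.tendsto_map'_iff]
    constructor
    · rintro ⟨l, hl⟩
      have h1 : Lp θ = l := hl.limsup_eq
      have h2 : Lm θ = l := hl.liminf_eq
      rw [h1, h2]
    · intro hle
      exact ⟨Lp θ, hconv θ hle⟩
  constructor
  · rw [hAchar]
    exact measurableSet_le hLpMeas hLmMeas
  · refine ⟨Lp, ?_, ?_⟩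
    · intro θ hθ
      rw [hAchar] at hθ
      rw [hmap θ, Filter.tendsto_map'_iff]
      exact hconv θ hθ
    · refine ⟨fun j θ => G θ (sq j), fun j => (hslice (sq j) (hsqIco j)).continuousOn, ?_⟩
      intro θ hθ
      rw [hAchar] at hθ
      have hsq1 : Tendsto sq atTop (𝓝[<] (1:ℝ)) := by
        rw [tendsto_nhdsWithin_iff]
        constructor
        · have h1 : Tendsto (fun j : ℕ => 1/((j:ℝ)+1)) atTop (𝓝 0) :=
            tendsto_one_div_add_atTop_nhds_zero_nat
          have h2 := (tendsto_const_nhds (x := (1:ℝ)) (f := atTop (α := ℕ))).sub h1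
          rw [sub_zero] at h2
          exact h2
        · exact Filter.Eventually.of_forall fun j => (hsqIco j).2
      exact (hconv θ hθ).comp hsq1

end
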